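/- Let 0<q<1, w>0, k ∈ ℝ, a_1,…,a_r, b_1,…,b_s ≥ 0, and let f be a positive function on (0,∞) satisfying f(x+w) = ( [x+a_1]_q ⋯ [x+a_r]_q / ([x+b_1]_q ⋯ [x+b_s]_q) )^k f(x) for all x>0 and f(w)=1. If f is logarithmically convex for all x>M, or logarithmically concave for all x>M, for some M≥0, then f(x) = ( ∏_{j=1}^r Γ_{q^w}((x+a_j)/w)/Γ_{q^w}((w+a_j)/w) · ∏_{i=1}^s Γ_{q^w}((w+b_i)/w)/Γ_{q^w}((x+b_i)/w) · [w]_q^{(r−s)(x/w−1)} )^k for all x>0. -/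

import Mathlib

open Real Set Filter

/-- The infinite q-Pochhammer symbol `(a;q)_∞ = ∏_{k≥0} (1 - a q^k)`. -/
noncomputable def qPochInf (a q : ℝ) : ℝ := ∏' k : ℕ, (1 - a * q ^ k)

/-- Jackson's q-gamma function for `0 < q < 1`. -/
noncomputable def qGamma (q x : ℝ) : ℝ :=
  qPochInf q q / qPochInf (q ^ x) q * (1 - q) ^ (1 - x)

/-- The q-number `[x]_q = (1 - q^x)/(1 - q)`. -/
noncomputable def qBracket (q x : ℝ) : ℝ := (1 - q ^ x) / (1 - q)

/-- The canonical solution `F` of the functional equation `(main eqn)`: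
`F(x) = (∏_j Γ_{q^w}((x+a_j)/w)/Γ_{q^w}((w+a_j)/w) ·
        ∏_i Γ_{q^w}((w+b_i)/w)/Γ_{q^w}((x+b_i)/w) · [w]_q^{(r-s)(x/w-1)})^k`. -/
noncomputable def mainSol (q w k : ℝ) (r s : ℕ) (a : Fin r → ℝ) (b : Fin s → ℝ)
    (x : ℝ) : ℝ :=
  ((∏ j, qGamma (q ^ w) ((x + a j) / w) / qGamma (q ^ w) ((w + a j) / w)) *
   (∏ i, qGamma (q ^ w) ((w + b i) / w) / qGamma (q ^ w) ((x + b i) / w)) *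
   qBracket q w ^ (((r : ℝ) - (s : ℝ)) * (x / w - 1))) ^ k

/-- `Efun q t = log (1 - q ^ t)`. -/
noncomputable def Efun (q t : ℝ) : ℝ := Real.log (1 - q ^ t)

/-- tail sum used in the canonical additive solution. -/
noncomputable def Dsum (q w c x : ℝ) : ℝ :=
  ∑' n : ℕ, (Efun q (c + ((n : ℝ) + 1) * w) - Efun q (c + x + ((n : ℝ) + 1) * w))

/-- the additive version of the quotient `G`. -/
noncomputable def gE (q : ℝ) (r s : ℕ) (a : Fin r → ℝ) (b : Fin s → ℝ) (x : ℝ) : ℝ :=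
  (∑ i, Efun q (x + a i)) - (∑ j, Efun q (x + b j)) - ((r:ℝ) - s) * Real.log (1 - q)

/-- the canonical additive solution. -/
noncomputable def Tfun (q w k : ℝ) (r s : ℕ) (a : Fin r → ℝ) (b : Fin s → ℝ) (x : ℝ) : ℝ :=
  k * (-(gE q r s a b x) + (∑ i, Dsum q w (a i) x) - (∑ j, Dsum q w (b j) x)
      + (x / w) * (((r:ℝ) - s) * (-Real.log (1 - q))))

section helpers
variable {q w k : ℝ} {r s : ℕ} {a : Fin r → ℝ} {b : Fin s → ℝ}


lemma qpow_lt_one (hq0 : 0 < q) (hq1 : q < 1) {t : ℝ} (ht : 0 < t) : q ^ t < 1 :=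
  Real.rpow_lt_one hq0.le hq1 ht

lemma one_sub_qpow_pos (hq0 : 0 < q) (hq1 : q < 1) {t : ℝ} (ht : 0 < t) :
    0 < 1 - q ^ t := by
  have := qpow_lt_one hq0 hq1 ht; linarith

lemma qBracket_pos (hq0 : 0 < q) (hq1 : q < 1) {t : ℝ} (ht : 0 < t) :
    0 < qBracket q t :=
  div_pos (one_sub_qpow_pos hq0 hq1 ht) (by linarith)

lemma Efun_nonpos (hq0 : 0 < q) (hq1 : q < 1) {t : ℝ} (ht : 0 < t) : Efun q t ≤ 0 := by
  have h1 := one_sub_qpow_pos hq0 hq1 ht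
  have h2 : q ^ t > 0 := Real.rpow_pos_of_pos hq0 t
  exact Real.log_nonpos (by linarith) (by linarith)

lemma abs_Efun_le (hq0 : 0 < q) (hq1 : q < 1) {t : ℝ} (ht : 0 < t) :
    |Efun q t| ≤ q ^ t / (1 - q ^ t) := by
  have h1 := one_sub_qpow_pos hq0 hq1 ht
  have h2 : (0:ℝ) < q ^ t := Real.rpow_pos_of_pos hq0 t
  have h3 : |Efun q t| = -Real.log (1 - q ^ t) := by
    rw [abs_of_nonpos (Efun_nonpos hq0 hq1 ht)]; rfl
  rw [h3, ← Real.log_inv]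
  have h4 := Real.log_le_sub_one_of_pos (x := (1 - q ^ t)⁻¹) (by positivity)
  have h5 : (1 - q ^ t)⁻¹ - 1 = q ^ t / (1 - q ^ t) := by field_simp; ring
  linarith

lemma summable_abs_Efun (hq0 : 0 < q) (hq1 : q < 1) (hw : 0 < w) {c : ℝ} (hc : 0 < c) :
    Summable (fun n : ℕ => |Efun q (c + n * w)|) := by
  have key : ∀ n : ℕ, |Efun q (c + n * w)| ≤ (q ^ c / (1 - q ^ c)) * (q ^ w) ^ n := by
    intro n
    have hpos : (0:ℝ) < c + n * w := by positivity
    have h1 := abs_Efun_le hq0 hq1 hpos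
    have hqc := one_sub_qpow_pos hq0 hq1 hc
    have h2 : q ^ (c + (n:ℝ) * w) = q ^ c * (q ^ w) ^ n := by
      rw [Real.rpow_add hq0, mul_comm (n:ℝ) w, Real.rpow_mul hq0.le, Real.rpow_natCast]
    have h3 : q ^ (c + (n:ℝ) * w) ≤ q ^ c := by
      rw [h2]
      have : (q ^ w) ^ n ≤ 1 :=
        pow_le_one₀ (Real.rpow_pos_of_pos hq0 w).le (qpow_lt_one hq0 hq1 hw).le
      nlinarith [Real.rpow_pos_of_pos hq0 c]
    have h4 : 1 - q ^ c ≤ 1 - q ^ (c + (n:ℝ) * w) := by linarith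
    calc |Efun q (c + n * w)| ≤ q ^ (c + (n:ℝ)*w) / (1 - q ^ (c + (n:ℝ)*w)) := h1
      _ ≤ q ^ (c + (n:ℝ)*w) / (1 - q ^ c) := by
          apply div_le_div_of_nonneg_left (Real.rpow_pos_of_pos hq0 _).le hqc h4
      _ = (q ^ c / (1 - q ^ c)) * (q ^ w) ^ n := by rw [h2]; ring
  apply Summable.of_nonneg_of_le (fun n => abs_nonneg _) key
  exact (summable_geometric_of_lt_one (Real.rpow_pos_of_pos hq0 w).le
    (qpow_lt_one hq0 hq1 hw)).mul_left _

lemma summable_Efun (hq0 : 0 < q) (hq1 : q < 1) (hw : 0 < w) {c : ℝ} (hc : 0 < c) :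
    Summable (fun n : ℕ => Efun q (c + n * w)) :=
  (summable_abs_Efun hq0 hq1 hw hc).of_abs


lemma qPochInf_eq_exp (hq0 : 0 < q) (hq1 : q < 1) (hw : 0 < w) {t : ℝ} (ht : 0 < t) :
    qPochInf (q ^ t) (q ^ w) = Real.exp (∑' n : ℕ, Efun q (t + n * w)) := by
  have hs := (summable_Efun hq0 hq1 hw ht).hasSum
  have hp := hs.rexp
  have heq : (Real.exp ∘ fun n : ℕ => Efun q (t + n * w)) =
      fun n : ℕ => 1 - q ^ t * (q ^ w) ^ n := by
    funext n
    have hpos : (0:ℝ) < t + n * w := by positivity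
    have h2 : q ^ (t + (n:ℝ) * w) = q ^ t * (q ^ w) ^ n := by
      rw [Real.rpow_add hq0, mul_comm (n:ℝ) w, Real.rpow_mul hq0.le, Real.rpow_natCast]
    simp only [Function.comp, Efun]
    rw [Real.exp_log (one_sub_qpow_pos hq0 hq1 hpos), h2]
  rw [heq] at hp
  exact hp.tprod_eq

lemma qPochInf_pos (hq0 : 0 < q) (hq1 : q < 1) (hw : 0 < w) {t : ℝ} (ht : 0 < t) :
    0 < qPochInf (q ^ t) (q ^ w) := by
  rw [qPochInf_eq_exp hq0 hq1 hw ht]; exact Real.exp_pos _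

lemma log_qGamma (hq0 : 0 < q) (hq1 : q < 1) (hw : 0 < w) {y : ℝ} (hy : 0 < y) :
    Real.log (qGamma (q ^ w) y) =
      (∑' n : ℕ, Efun q (w + n * w)) - (∑' n : ℕ, Efun q (y * w + n * w))
        + (1 - y) * Real.log (1 - q ^ w) := by
  have hQ0 : (0:ℝ) < q ^ w := Real.rpow_pos_of_pos hq0 w
  have hQy : (q ^ w) ^ y = q ^ (y * w) := by
    rw [mul_comm, Real.rpow_mul hq0.le]
  have h1 : qPochInf (q ^ w) (q ^ w) = Real.exp (∑' n : ℕ, Efun q (w + n * w)) :=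
    qPochInf_eq_exp hq0 hq1 hw hw
  have h2 : qPochInf ((q ^ w) ^ y) (q ^ w) = Real.exp (∑' n : ℕ, Efun q (y * w + n * w)) := by
    rw [hQy]; exact qPochInf_eq_exp hq0 hq1 hw (by positivity)
  have h3 : (0:ℝ) < 1 - q ^ w := one_sub_qpow_pos hq0 hq1 hw
  unfold qGamma
  rw [h1, h2, Real.log_mul (by positivity) (by positivity), Real.log_div (by positivity) (by positivity),
    Real.log_exp, Real.log_exp, Real.log_rpow h3]

lemma qGamma_pos (hq0 : 0 < q) (hq1 : q < 1) (hw : 0 < w) {y : ℝ} (hy : 0 < y) :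
    0 < qGamma (q ^ w) y := by
  have hQy : (q ^ w) ^ y = q ^ (y * w) := by rw [mul_comm, Real.rpow_mul hq0.le]
  have h3 : (0:ℝ) < 1 - q ^ w := one_sub_qpow_pos hq0 hq1 hw
  unfold qGamma
  have := qPochInf_pos hq0 hq1 hw hw
  have h2 : 0 < qPochInf ((q ^ w) ^ y) (q ^ w) := by
    rw [hQy]; exact qPochInf_pos hq0 hq1 hw (by positivity)
  positivity

lemma summable_Efun_shift (hq0 : 0 < q) (hq1 : q < 1) (hw : 0 < w) {c : ℝ} (hc : 0 ≤ c) :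
    Summable (fun n : ℕ => Efun q (c + ((n : ℝ) + 1) * w)) := by
  have h := summable_Efun hq0 hq1 hw (c := c + w) (by linarith)
  refine h.congr fun n => ?_
  rw [show c + w + (n : ℝ) * w = c + ((n : ℝ) + 1) * w by ring]

lemma Dsum_eq (hq0 : 0 < q) (hq1 : q < 1) (hw : 0 < w) {c x : ℝ} (hc : 0 ≤ c) (hx : 0 < x) :
    Dsum q w c x = (∑' n : ℕ, Efun q (c + ((n : ℝ) + 1) * w))
      - ∑' n : ℕ, Efun q (c + x + ((n : ℝ) + 1) * w) :=
  Summable.tsum_sub (summable_Efun_shift hq0 hq1 hw hc)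
    (summable_Efun_shift hq0 hq1 hw (by linarith))

lemma tsum_shift_Efun (hq0 : 0 < q) (hq1 : q < 1) (hw : 0 < w) {c : ℝ} (hc : 0 < c) :
    ∑' n : ℕ, Efun q (c + (n : ℝ) * w)
      = Efun q c + ∑' n : ℕ, Efun q (c + ((n : ℝ) + 1) * w) := by
  have h := Summable.tsum_eq_zero_add (summable_Efun hq0 hq1 hw hc)
  simp only [Nat.cast_zero, zero_mul, add_zero, Nat.cast_add, Nat.cast_one] at h
  exact h

lemma Dsum_rec (hq0 : 0 < q) (hq1 : q < 1) (hw : 0 < w) {c x : ℝ} (hc : 0 ≤ c) (hx : 0 < x) :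
    Dsum q w c (x + w) = Dsum q w c x + Efun q (c + x + w) := by
  rw [Dsum_eq hq0 hq1 hw hc (by linarith), Dsum_eq hq0 hq1 hw hc hx]
  have h1 : (∑' n : ℕ, Efun q (c + (x + w) + ((n : ℝ) + 1) * w))
      = ∑' n : ℕ, Efun q ((c + x + w) + ((n : ℝ) + 1) * w) := by
    refine tsum_congr fun n => ?_
    rw [show c + (x + w) + ((n : ℝ) + 1) * w = c + x + w + ((n : ℝ) + 1) * w by ring]
  have h2 : (∑' n : ℕ, Efun q ((c + x + w) + ((n : ℝ) + 1) * w))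
      = (∑' n : ℕ, Efun q ((c + x) + ((n : ℝ) + 1) * w)) - Efun q (c + x + w) := by
    have hs := tsum_shift_Efun hq0 hq1 hw (c := c + x + w) (by linarith)
    have h3 : (∑' n : ℕ, Efun q (c + x + w + (n : ℝ) * w))
        = ∑' n : ℕ, Efun q (c + x + ((n : ℝ) + 1) * w) := by
      refine tsum_congr fun n => ?_
      rw [show c + x + w + (n : ℝ) * w = c + x + ((n : ℝ) + 1) * w by ring]
    have h4 : (∑' n : ℕ, Efun q (c + x + w + ((n : ℝ) + 1) * w)) =
        ∑' n : ℕ, Efun q (c + x + w + ((n : ℝ) + 1) * w) := rfl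
    -- hs : h3-sum = Efun (c+x+w) + shifted
    rw [h3] at hs
    linarith [hs]
  rw [h1, h2]
  ring



lemma log_qGamma_ratio' (hq0 : 0 < q) (hq1 : q < 1) (hw : 0 < w) {c x : ℝ}
    (hc : 0 ≤ c) (hx : 0 < x) :
    Real.log (qGamma (q ^ w) ((x + c) / w) / qGamma (q ^ w) ((w + c) / w)) =
      -Efun q (x + c) + Dsum q w c x + (1 - x / w) * Real.log (1 - q ^ w) := by
  have hy1 : (0:ℝ) < (x + c) / w := by positivity
  have hy2 : (0:ℝ) < (w + c) / w := by positivity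
  have e1 : (x + c) / w * w = x + c := by field_simp
  have e2 : (w + c) / w * w = w + c := by field_simp
  rw [Real.log_div (qGamma_pos hq0 hq1 hw hy1).ne' (qGamma_pos hq0 hq1 hw hy2).ne',
    log_qGamma hq0 hq1 hw hy1, log_qGamma hq0 hq1 hw hy2, e1, e2]
  -- now express the two tsums via Dsum
  have hA : (∑' n : ℕ, Efun q (x + c + (n : ℝ) * w))
      = Efun q (x + c) + ∑' n : ℕ, Efun q (c + x + ((n : ℝ) + 1) * w) := by
    rw [tsum_shift_Efun hq0 hq1 hw (by linarith : (0:ℝ) < x + c)]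
    congr 1
    exact tsum_congr fun n => by rw [show x + c + ((n:ℝ) + 1) * w = c + x + ((n:ℝ)+1) * w by ring]
  have hB : (∑' n : ℕ, Efun q (w + c + (n : ℝ) * w))
      = ∑' n : ℕ, Efun q (c + ((n : ℝ) + 1) * w) := by
    exact tsum_congr fun n => by rw [show w + c + (n:ℝ) * w = c + ((n:ℝ)+1) * w by ring]
  rw [hA, hB, Dsum_eq hq0 hq1 hw hc hx]
  have hww : (1 - (w + c)/w) = -(c/w) := by field_simp; ring
  have hxx : (1 - (x + c)/w) = 1 - x/w - c/w := by field_simp; ring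
  rw [hww, hxx]
  ring

lemma Tfun_rec (hq0 : 0 < q) (hq1 : q < 1) (hw : 0 < w)
    (ha : ∀ i, 0 ≤ a i) (hb : ∀ j, 0 ≤ b j) {x : ℝ} (hx : 0 < x) :
    Tfun q w k r s a b (x + w) = Tfun q w k r s a b x + k * gE q r s a b x := by
  unfold Tfun gE
  have hDa : ∀ i, Dsum q w (a i) (x + w) = Dsum q w (a i) x + Efun q (x + w + a i) := by
    intro i
    rw [Dsum_rec hq0 hq1 hw (ha i) hx,
      show a i + x + w = x + w + a i by ring]
  have hDb : ∀ j, Dsum q w (b j) (x + w) = Dsum q w (b j) x + Efun q (x + w + b j) := by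
    intro j
    rw [Dsum_rec hq0 hq1 hw (hb j) hx,
      show b j + x + w = x + w + b j by ring]
  rw [Finset.sum_congr rfl (fun i _ => hDa i), Finset.sum_congr rfl (fun j _ => hDb j),
    Finset.sum_add_distrib, Finset.sum_add_distrib]
  have hxw : (x + w) / w = x / w + 1 := by field_simp
  rw [hxw]
  ring

lemma log_mainSol (hq0 : 0 < q) (hq1 : q < 1) (hw : 0 < w)
    (ha : ∀ i, 0 ≤ a i) (hb : ∀ j, 0 ≤ b j) {x : ℝ} (hx : 0 < x) :
    Real.log (mainSol q w k r s a b x) = Tfun q w k r s a b x := by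
  have hbr : 0 < qBracket q w := qBracket_pos hq0 hq1 hw
  have hGa : ∀ i : Fin r,
      0 < qGamma (q ^ w) ((x + a i) / w) / qGamma (q ^ w) ((w + a i) / w) := fun i =>
    div_pos (qGamma_pos hq0 hq1 hw (by have := ha i; positivity))
      (qGamma_pos hq0 hq1 hw (by have := ha i; positivity))
  have hGb : ∀ j : Fin s,
      0 < qGamma (q ^ w) ((w + b j) / w) / qGamma (q ^ w) ((x + b j) / w) := fun j =>
    div_pos (qGamma_pos hq0 hq1 hw (by have := hb j; positivity))
      (qGamma_pos hq0 hq1 hw (by have := hb j; positivity))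
  have hPa : 0 < ∏ i, qGamma (q ^ w) ((x + a i) / w) / qGamma (q ^ w) ((w + a i) / w) :=
    Finset.prod_pos fun i _ => hGa i
  have hPb : 0 < ∏ j, qGamma (q ^ w) ((w + b j) / w) / qGamma (q ^ w) ((x + b j) / w) :=
    Finset.prod_pos fun j _ => hGb j
  have hP : 0 < (∏ i, qGamma (q ^ w) ((x + a i) / w) / qGamma (q ^ w) ((w + a i) / w)) *
      (∏ j, qGamma (q ^ w) ((w + b j) / w) / qGamma (q ^ w) ((x + b j) / w)) *
      qBracket q w ^ (((r : ℝ) - (s : ℝ)) * (x / w - 1)) := by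
    have : (0:ℝ) < qBracket q w ^ (((r : ℝ) - (s : ℝ)) * (x / w - 1)) :=
      Real.rpow_pos_of_pos hbr _
    positivity
  unfold mainSol
  rw [Real.log_rpow hP, Real.log_mul (by positivity) (Real.rpow_pos_of_pos hbr _).ne',
    Real.log_mul hPa.ne' hPb.ne', Real.log_rpow hbr,
    Real.log_prod (fun i _ => (hGa i).ne'), Real.log_prod (fun j _ => (hGb j).ne')]
  have hA : ∀ i : Fin r,
      Real.log (qGamma (q ^ w) ((x + a i) / w) / qGamma (q ^ w) ((w + a i) / w)) =
      -Efun q (x + a i) + Dsum q w (a i) x + (1 - x / w) * Real.log (1 - q ^ w) :=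
    fun i => log_qGamma_ratio' hq0 hq1 hw (ha i) hx
  have hB : ∀ j : Fin s,
      Real.log (qGamma (q ^ w) ((w + b j) / w) / qGamma (q ^ w) ((x + b j) / w)) =
      -(-Efun q (x + b j) + Dsum q w (b j) x + (1 - x / w) * Real.log (1 - q ^ w)) := by
    intro j
    rw [← log_qGamma_ratio' hq0 hq1 hw (hb j) hx, ← Real.log_inv, inv_div]
  rw [Finset.sum_congr rfl (fun i _ => hA i), Finset.sum_congr rfl (fun j _ => hB j)]
  have hlogbr : Real.log (qBracket q w) = Efun q w - Real.log (1 - q) := by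
    unfold qBracket Efun
    rw [Real.log_div (one_sub_qpow_pos hq0 hq1 hw).ne' (by linarith)]
  rw [hlogbr]
  unfold Tfun gE
  simp only [Finset.sum_add_distrib, Finset.sum_neg_distrib, Finset.sum_sub_distrib,
    Finset.sum_const, Finset.card_univ, Fintype.card_fin, nsmul_eq_mul]
  have hE : Efun q w = Real.log (1 - q ^ w) := rfl
  rw [hE]
  ring

lemma exp_gE (hq0 : 0 < q) (hq1 : q < 1)
    (ha : ∀ i, 0 ≤ a i) (hb : ∀ j, 0 ≤ b j) {x : ℝ} (hx : 0 < x) :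
    (∏ i, qBracket q (x + a i)) / (∏ j, qBracket q (x + b j))
      = Real.exp (gE q r s a b x) := by
  have hba : ∀ i : Fin r, 0 < qBracket q (x + a i) := fun i =>
    qBracket_pos hq0 hq1 (by have := ha i; linarith)
  have hbb : ∀ j : Fin s, 0 < qBracket q (x + b j) := fun j =>
    qBracket_pos hq0 hq1 (by have := hb j; linarith)
  have hPa : 0 < ∏ i, qBracket q (x + a i) := Finset.prod_pos fun i _ => hba i
  have hPb : 0 < ∏ j, qBracket q (x + b j) := Finset.prod_pos fun j _ => hbb j
  rw [← Real.exp_log (div_pos hPa hPb)]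
  congr 1
  rw [Real.log_div hPa.ne' hPb.ne', Real.log_prod (fun i _ => (hba i).ne'),
    Real.log_prod (fun j _ => (hbb j).ne')]
  have hq' : (0:ℝ) < 1 - q := by linarith
  have hl : ∀ c : ℝ, 0 ≤ c → Real.log (qBracket q (x + c))
      = Efun q (x + c) - Real.log (1 - q) := by
    intro c hc
    unfold qBracket Efun
    rw [Real.log_div (one_sub_qpow_pos hq0 hq1 (by linarith)).ne' hq'.ne']
  rw [Finset.sum_congr rfl (fun i _ => hl (a i) (ha i)),
    Finset.sum_congr rfl (fun j _ => hl (b j) (hb j))]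
  unfold gE
  simp only [Finset.sum_sub_distrib, Finset.sum_const, Finset.card_univ, Fintype.card_fin,
    nsmul_eq_mul]
  ring

lemma phi_rec (hq0 : 0 < q) (hq1 : q < 1)
    (ha : ∀ i, 0 ≤ a i) (hb : ∀ j, 0 ≤ b j)
    {f : ℝ → ℝ} (hpos : ∀ x > 0, 0 < f x)
    (hfe : ∀ x > 0, f (x + w) =
      ((∏ i, qBracket q (x + a i)) / ∏ j, qBracket q (x + b j)) ^ k * f x)
    {x : ℝ} (hx : 0 < x) (hw : 0 < w) :
    Real.log (f (x + w)) = Real.log (f x) + k * gE q r s a b x := by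
  rw [hfe x hx, exp_gE hq0 hq1 ha hb hx, ← Real.exp_log (hpos x hx),
    ← Real.exp_mul, ← Real.exp_add, Real.exp_log (hpos x hx), Real.log_exp]
  ring

lemma phi_iter (hq0 : 0 < q) (hq1 : q < 1)
    (ha : ∀ i, 0 ≤ a i) (hb : ∀ j, 0 ≤ b j)
    {f : ℝ → ℝ} (hpos : ∀ x > 0, 0 < f x)
    (hfe : ∀ x > 0, f (x + w) =
      ((∏ i, qBracket q (x + a i)) / ∏ j, qBracket q (x + b j)) ^ k * f x)
    {x : ℝ} (hx : 0 < x) (hw : 0 < w) (n : ℕ) :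
    Real.log (f (x + n * w)) = Real.log (f x)
      + ∑ j ∈ Finset.range n, k * gE q r s a b (x + j * w) := by
  induction n with
  | zero => simp
  | succ m ih =>
      have hxm : (0:ℝ) < x + m * w := by positivity
      have h1 : x + ((m:ℝ) + 1) * w = (x + m * w) + w := by ring
      have h2 := phi_rec hq0 hq1 ha hb hpos hfe hxm hw
      rw [Finset.sum_range_succ, Nat.cast_add, Nat.cast_one, h1, h2, ih]
      ring

lemma tendsto_Efun_shift (hq0 : 0 < q) (hq1 : q < 1) (hw : 0 < w) {c : ℝ} (hc : 0 ≤ c) :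
    Tendsto (fun n : ℕ => Efun q (c + ((n : ℝ) + 1) * w)) atTop (nhds 0) :=
  (summable_Efun_shift hq0 hq1 hw hc).tendsto_atTop_zero

lemma tendsto_gE_grid (hq0 : 0 < q) (hq1 : q < 1) (hw : 0 < w)
    (ha : ∀ i, 0 ≤ a i) (hb : ∀ j, 0 ≤ b j) :
    Tendsto (fun m : ℕ => gE q r s a b (((m:ℝ) + 1) * w)) atTop
      (nhds (-(((r:ℝ) - s) * Real.log (1 - q)))) := by
  have key : ∀ m : ℕ, gE q r s a b (((m:ℝ) + 1) * w)
      = (∑ i, Efun q (a i + ((m:ℝ) + 1) * w)) - (∑ j, Efun q (b j + ((m:ℝ) + 1) * w))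
        - ((r:ℝ) - s) * Real.log (1 - q) := by
    intro m
    unfold gE
    congr 1
    congr 1
    · exact Finset.sum_congr rfl fun i _ => by rw [add_comm]
    · exact Finset.sum_congr rfl fun j _ => by rw [add_comm]
  simp only [key]
  have h1 : Tendsto (fun m : ℕ => ∑ i, Efun q (a i + ((m:ℝ) + 1) * w)) atTop (nhds 0) := by
    have := tendsto_finset_sum (Finset.univ : Finset (Fin r))
      (fun i _ => tendsto_Efun_shift hq0 hq1 hw (ha i))
    simpa using this
  have h2 : Tendsto (fun m : ℕ => ∑ j, Efun q (b j + ((m:ℝ) + 1) * w)) atTop (nhds 0) := by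
    have := tendsto_finset_sum (Finset.univ : Finset (Fin s))
      (fun j _ => tendsto_Efun_shift hq0 hq1 hw (hb j))
    simpa using this
  have h3 := (h1.sub h2).sub
    (tendsto_const_nhds : Tendsto (fun _ : ℕ => ((r:ℝ) - s) * Real.log (1 - q)) atTop _)
  simpa using h3

lemma tendsto_gE_grid' (hq0 : 0 < q) (hq1 : q < 1) (hw : 0 < w)
    (ha : ∀ i, 0 ≤ a i) (hb : ∀ j, 0 ≤ b j) :
    Tendsto (fun m : ℕ => gE q r s a b ((m:ℝ) * w)) atTop
      (nhds (-(((r:ℝ) - s) * Real.log (1 - q)))) := by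
  rw [← Filter.tendsto_add_atTop_iff_nat 1]
  have : (fun m : ℕ => gE q r s a b (((m + 1 : ℕ):ℝ) * w))
      = fun m : ℕ => gE q r s a b (((m:ℝ) + 1) * w) := by
    funext m; push_cast; ring_nf
  rw [this]
  exact tendsto_gE_grid hq0 hq1 hw ha hb

lemma hasSum_gE_diff (hq0 : 0 < q) (hq1 : q < 1) (hw : 0 < w)
    (ha : ∀ i, 0 ≤ a i) (hb : ∀ j, 0 ≤ b j) {x : ℝ} (hx : 0 < x) :
    HasSum (fun n : ℕ => gE q r s a b (((n:ℝ) + 1) * w) - gE q r s a b (x + ((n:ℝ) + 1) * w))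
      ((∑ i, Dsum q w (a i) x) - ∑ j, Dsum q w (b j) x) := by
  have hsi : ∀ c : ℝ, 0 ≤ c → HasSum
      (fun n : ℕ => Efun q (c + ((n:ℝ) + 1) * w) - Efun q (c + x + ((n:ℝ) + 1) * w))
      (Dsum q w c x) :=
    fun c hc => ((summable_Efun_shift hq0 hq1 hw hc).sub
      (summable_Efun_shift hq0 hq1 hw (by linarith))).hasSum
  have hA : HasSum (fun n : ℕ => ∑ i, (Efun q (a i + ((n:ℝ) + 1) * w)
      - Efun q (a i + x + ((n:ℝ) + 1) * w))) (∑ i, Dsum q w (a i) x) :=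
    hasSum_sum fun i _ => hsi (a i) (ha i)
  have hB : HasSum (fun n : ℕ => ∑ j, (Efun q (b j + ((n:ℝ) + 1) * w)
      - Efun q (b j + x + ((n:ℝ) + 1) * w))) (∑ j, Dsum q w (b j) x) :=
    hasSum_sum fun j _ => hsi (b j) (hb j)
  have := hA.sub hB
  refine this.congr_fun fun n => ?_
  have k1 : ∀ c : ℝ, Efun q (c + ((n:ℝ)+1) * w) - Efun q (c + x + ((n:ℝ)+1) * w)
      = Efun q (((n:ℝ)+1) * w + c) - Efun q (x + ((n:ℝ)+1) * w + c) := by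
    intro c
    rw [show c + ((n:ℝ)+1) * w = ((n:ℝ)+1) * w + c by ring,
      show c + x + ((n:ℝ)+1) * w = x + ((n:ℝ)+1) * w + c by ring]
  rw [Finset.sum_congr rfl fun i _ => k1 (a i), Finset.sum_congr rfl fun j _ => k1 (b j)]
  unfold gE
  rw [Finset.sum_sub_distrib, Finset.sum_sub_distrib]
  ring

lemma phi_eq_T_base (hq0 : 0 < q) (hq1 : q < 1) (hw : 0 < w)
    (ha : ∀ i, 0 ≤ a i) (hb : ∀ j, 0 ≤ b j)
    {f : ℝ → ℝ} (hpos : ∀ x > 0, 0 < f x)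
    (hfe : ∀ x > 0, f (x + w) =
      ((∏ i, qBracket q (x + a i)) / ∏ j, qBracket q (x + b j)) ^ k * f x)
    (hfw : f w = 1) {M : ℝ} (hM : 0 ≤ M)
    (hcv : ConvexOn ℝ (Ioi M) (fun x => Real.log (f x)))
    {x : ℝ} (hx : 0 < x) (hxw : x ≤ w) :
    Real.log (f x) = Tfun q w k r s a b x := by
  set φ : ℝ → ℝ := fun y => Real.log (f y) with hφ
  set g : ℝ → ℝ := gE q r s a b with hg
  -- grid values
  have grid : ∀ m : ℕ, φ (((m:ℝ) + 1) * w)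
      = ∑ j ∈ Finset.range m, k * g (((j:ℝ) + 1) * w) := by
    intro m
    have h1 := phi_iter hq0 hq1 ha hb hpos hfe hw hw m
    rw [show w + (m:ℝ) * w = ((m:ℝ) + 1) * w by ring] at h1
    simp only [hφ, hg]
    rw [h1, hfw]
    simp only [Real.log_one, zero_add]
    exact Finset.sum_congr rfl fun j _ => by rw [show w + (j:ℝ) * w = ((j:ℝ)+1) * w by ring]
  -- iteration from x
  have iter : ∀ m : ℕ, φ (x + ((m:ℝ) + 1) * w)
      = φ x + ∑ j ∈ Finset.range (m + 1), k * g (x + (j:ℝ) * w) := by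
    intro m
    have h1 := phi_iter hq0 hq1 ha hb hpos hfe hx hw (m + 1)
    rw [show ((m+1 : ℕ):ℝ) = (m:ℝ) + 1 by push_cast; ring] at h1
    simp only [hφ, hg]
    exact h1
  -- grid recurrence
  have gridrec : ∀ y : ℝ, 0 < y → φ (y + w) = φ y + k * g y := by
    intro y hy
    simp only [hφ, hg]
    exact phi_rec hq0 hq1 ha hb hpos hfe hy hw
  -- convexity sandwich for m with M < m*w
  have sandwich : ∀ m : ℕ, M < (m:ℝ) * w →
      φ (((m:ℝ)+1) * w) + (x/w) * (k * g ((m:ℝ) * w)) ≤ φ (x + ((m:ℝ)+1) * w) ∧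
      φ (x + ((m:ℝ)+1) * w) ≤ φ (((m:ℝ)+1) * w) + (x/w) * (k * g (((m:ℝ)+1) * w)) := by
    intro m hmw
    have hmw0 : (0:ℝ) < (m:ℝ) * w := lt_of_le_of_lt hM hmw
    have hxw0 : (0:ℝ) < x + w := by linarith
    have hB : φ (((m:ℝ)+1) * w) = φ ((m:ℝ) * w) + k * g ((m:ℝ) * w) := by
      have := gridrec ((m:ℝ) * w) hmw0
      rw [show (m:ℝ) * w + w = ((m:ℝ)+1) * w by ring] at this
      exact this
    have hC : φ (((m:ℝ)+2) * w) = φ (((m:ℝ)+1) * w) + k * g (((m:ℝ)+1) * w) := by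
      have := gridrec (((m:ℝ)+1) * w) (by nlinarith)
      rw [show ((m:ℝ)+1) * w + w = ((m:ℝ)+2) * w by ring] at this
      exact this
    constructor
    · -- lower bound
      have hu : (m:ℝ) * w ∈ Ioi M := hmw
      have hv : x + ((m:ℝ)+1) * w ∈ Ioi M := by
        simp only [mem_Ioi]; nlinarith
      have hα : (0:ℝ) ≤ x / (x + w) := by positivity
      have hβ : (0:ℝ) ≤ w / (x + w) := by positivity
      have hαβ : x / (x + w) + w / (x + w) = 1 := by field_simp
      have hcomb := hcv.2 hu hv hα hβ hαβ
      have hpoint : (x / (x+w)) • ((m:ℝ) * w) + (w / (x+w)) • (x + ((m:ℝ)+1) * w)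
          = ((m:ℝ)+1) * w := by
        simp only [smul_eq_mul]; field_simp; ring
      rw [hpoint] at hcomb
      simp only [smul_eq_mul] at hcomb
      -- hcomb : φ ((m+1)w) ≤ x/(x+w) * φ(mw) + w/(x+w) * φ(x+(m+1)w)
      have e3 : x/(x+w) * φ ((m:ℝ) * w) + w/(x+w) * φ (x + ((m:ℝ)+1) * w)
          = (x * φ ((m:ℝ) * w) + w * φ (x + ((m:ℝ)+1) * w)) / (x+w) := by
        field_simp
      rw [e3] at hcomb
      have hcomb' := (le_div_iff₀ hxw0).mp hcomb
      have hP : φ ((m:ℝ) * w) = φ (((m:ℝ)+1) * w) - k * g ((m:ℝ) * w) := by linarith [hB]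
      rw [hP] at hcomb'
      have hnum : 0 ≤ w * φ (x + ((m:ℝ)+1) * w)
          - (φ (((m:ℝ)+1) * w) * w + x * (k * g ((m:ℝ) * w))) := by nlinarith [hcomb']
      rw [← sub_nonneg]
      have h9 : φ (x + ((m:ℝ)+1) * w) - (φ (((m:ℝ)+1) * w) + x / w * (k * g ((m:ℝ) * w)))
          = (w * φ (x + ((m:ℝ)+1) * w)
            - (φ (((m:ℝ)+1) * w) * w + x * (k * g ((m:ℝ) * w)))) / w := by
        field_simp
      rw [h9]
      exact div_nonneg hnum hw.le
    · -- upper bound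
      have hu : ((m:ℝ)+1) * w ∈ Ioi M := by simp only [mem_Ioi]; nlinarith
      have hv : ((m:ℝ)+2) * w ∈ Ioi M := by simp only [mem_Ioi]; nlinarith
      have hα : (0:ℝ) ≤ 1 - x / w := by
        have : x / w ≤ 1 := by rw [div_le_one hw]; exact hxw
        linarith
      have hβ : (0:ℝ) ≤ x / w := by positivity
      have hαβ : (1 - x / w) + x / w = 1 := by ring
      have hcomb := hcv.2 hu hv hα hβ hαβ
      have hpoint : (1 - x/w) • (((m:ℝ)+1) * w) + (x/w) • (((m:ℝ)+2) * w)
          = x + ((m:ℝ)+1) * w := by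
        simp only [smul_eq_mul]; field_simp; ring
      rw [hpoint] at hcomb
      simp only [smul_eq_mul] at hcomb
      rw [hC] at hcomb
      nlinarith [hcomb]
  -- the partial sums
  have hS : Tendsto (fun m : ℕ => ∑ j ∈ Finset.range m,
        (g (((j:ℝ)+1) * w) - g (x + ((j:ℝ)+1) * w))) atTop
      (nhds ((∑ i, Dsum q w (a i) x) - ∑ j, Dsum q w (b j) x)) :=
    (hasSum_gE_diff hq0 hq1 hw ha hb hx).tendsto_sum_nat
  set D : ℝ := (∑ i, Dsum q w (a i) x) - ∑ j, Dsum q w (b j) x with hD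
  set Lc : ℝ := -(((r:ℝ) - s) * Real.log (1 - q)) with hLc
  set T0 : ℝ := -(k * g x) + k * D + (x/w) * (k * Lc) with hT0
  -- bound sequences
  set U : ℕ → ℝ := fun m => -(k * g x) + k * (∑ j ∈ Finset.range m,
    (g (((j:ℝ)+1) * w) - g (x + ((j:ℝ)+1) * w))) + (x/w) * (k * g (((m:ℝ)+1) * w)) with hU
  set L : ℕ → ℝ := fun m => -(k * g x) + k * (∑ j ∈ Finset.range m,
    (g (((j:ℝ)+1) * w) - g (x + ((j:ℝ)+1) * w))) + (x/w) * (k * g ((m:ℝ) * w)) with hL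
  have hUlim : Tendsto U atTop (nhds T0) := by
    apply Tendsto.add (Tendsto.add tendsto_const_nhds (hS.const_mul k))
    exact (Tendsto.const_mul k (tendsto_gE_grid hq0 hq1 hw ha hb)).const_mul (x/w)
  have hLlim : Tendsto L atTop (nhds T0) := by
    apply Tendsto.add (Tendsto.add tendsto_const_nhds (hS.const_mul k))
    exact (Tendsto.const_mul k (tendsto_gE_grid' hq0 hq1 hw ha hb)).const_mul (x/w)
  -- key algebraic identity relating φ x to the grid quantities
  have keyid : ∀ m : ℕ, φ x = φ (x + ((m:ℝ)+1) * w) - φ (((m:ℝ)+1) * w)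
      - (k * g x) + k * (∑ j ∈ Finset.range m,
        (g (((j:ℝ)+1) * w) - g (x + ((j:ℝ)+1) * w))) := by
    intro m
    have hsplit : ∑ j ∈ Finset.range (m + 1), k * g (x + (j:ℝ) * w)
        = k * g x + ∑ j ∈ Finset.range m, k * g (x + ((j:ℝ)+1) * w) := by
      rw [Finset.sum_range_succ']
      simp only [Nat.cast_zero, zero_mul, add_zero, Nat.cast_add, Nat.cast_one]
      ring
    have hexp : k * (∑ j ∈ Finset.range m, (g (((j:ℝ)+1) * w) - g (x + ((j:ℝ)+1) * w)))
        = (∑ j ∈ Finset.range m, k * g (((j:ℝ)+1) * w))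
          - ∑ j ∈ Finset.range m, k * g (x + ((j:ℝ)+1) * w) := by
      rw [Finset.mul_sum, ← Finset.sum_sub_distrib]
      exact Finset.sum_congr rfl fun j _ => by ring
    rw [iter m, grid m, hsplit, hexp]
    ring
  -- eventual bounds
  obtain ⟨m₀, hm₀⟩ := exists_nat_gt (M / w)
  have hev : ∀ m : ℕ, m₀ ≤ m → M < (m:ℝ) * w := by
    intro m hm
    have : M / w < (m:ℝ) := lt_of_lt_of_le hm₀ (by exact_mod_cast hm)
    exact (div_lt_iff₀ hw).mp this
  have hub : ∀ᶠ m in atTop, φ x ≤ U m := by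
    filter_upwards [eventually_ge_atTop m₀] with m hm
    have hsw := (sandwich m (hev m hm)).2
    have := keyid m
    simp only [hU]
    linarith
  have hlb : ∀ᶠ m in atTop, L m ≤ φ x := by
    filter_upwards [eventually_ge_atTop m₀] with m hm
    have hsw := (sandwich m (hev m hm)).1
    have := keyid m
    simp only [hL]
    linarith
  have h1 : φ x ≤ T0 := ge_of_tendsto hUlim hub
  have h2 : T0 ≤ φ x := le_of_tendsto hLlim hlb
  have hfin : φ x = T0 := le_antisymm h1 h2
  show φ x = Tfun q w k r s a b x
  rw [hfin, hT0, hLc, hD]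
  unfold Tfun
  simp only [hg]
  ring

lemma mainSol_pos (hq0 : 0 < q) (hq1 : q < 1) (hw : 0 < w)
    (ha : ∀ i, 0 ≤ a i) (hb : ∀ j, 0 ≤ b j) {x : ℝ} (hx : 0 < x) :
    0 < mainSol q w k r s a b x := by
  have hbr : 0 < qBracket q w := qBracket_pos hq0 hq1 hw
  have hPa : 0 < ∏ i, qGamma (q ^ w) ((x + a i) / w) / qGamma (q ^ w) ((w + a i) / w) :=
    Finset.prod_pos fun i _ => div_pos
      (qGamma_pos hq0 hq1 hw (by have := ha i; positivity))
      (qGamma_pos hq0 hq1 hw (by have := ha i; positivity))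
  have hPb : 0 < ∏ j, qGamma (q ^ w) ((w + b j) / w) / qGamma (q ^ w) ((x + b j) / w) :=
    Finset.prod_pos fun j _ => div_pos
      (qGamma_pos hq0 hq1 hw (by have := hb j; positivity))
      (qGamma_pos hq0 hq1 hw (by have := hb j; positivity))
  have hbp : (0:ℝ) < qBracket q w ^ (((r : ℝ) - (s : ℝ)) * (x / w - 1)) :=
    Real.rpow_pos_of_pos hbr _
  unfold mainSol
  have : (0:ℝ) < (∏ i, qGamma (q ^ w) ((x + a i) / w) / qGamma (q ^ w) ((w + a i) / w)) *
      (∏ j, qGamma (q ^ w) ((w + b j) / w) / qGamma (q ^ w) ((x + b j) / w)) *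
      qBracket q w ^ (((r : ℝ) - (s : ℝ)) * (x / w - 1)) := by positivity
  exact Real.rpow_pos_of_pos this k

lemma mainSol_neg_k (hq0 : 0 < q) (hq1 : q < 1) (hw : 0 < w)
    (ha : ∀ i, 0 ≤ a i) (hb : ∀ j, 0 ≤ b j) {x : ℝ} (hx : 0 < x) :
    mainSol q w (-k) r s a b x = (mainSol q w k r s a b x)⁻¹ := by
  have hbr : 0 < qBracket q w := qBracket_pos hq0 hq1 hw
  have hPa : 0 < ∏ i, qGamma (q ^ w) ((x + a i) / w) / qGamma (q ^ w) ((w + a i) / w) :=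
    Finset.prod_pos fun i _ => div_pos
      (qGamma_pos hq0 hq1 hw (by have := ha i; positivity))
      (qGamma_pos hq0 hq1 hw (by have := ha i; positivity))
  have hPb : 0 < ∏ j, qGamma (q ^ w) ((w + b j) / w) / qGamma (q ^ w) ((x + b j) / w) :=
    Finset.prod_pos fun j _ => div_pos
      (qGamma_pos hq0 hq1 hw (by have := hb j; positivity))
      (qGamma_pos hq0 hq1 hw (by have := hb j; positivity))
  have hbp : (0:ℝ) < qBracket q w ^ (((r : ℝ) - (s : ℝ)) * (x / w - 1)) :=
    Real.rpow_pos_of_pos hbr _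
  unfold mainSol
  rw [Real.rpow_neg (by positivity)]

lemma phi_eq_T_all (hq0 : 0 < q) (hq1 : q < 1) (hw : 0 < w)
    (ha : ∀ i, 0 ≤ a i) (hb : ∀ j, 0 ≤ b j)
    {f : ℝ → ℝ} (hpos : ∀ x > 0, 0 < f x)
    (hfe : ∀ x > 0, f (x + w) =
      ((∏ i, qBracket q (x + a i)) / ∏ j, qBracket q (x + b j)) ^ k * f x)
    (hfw : f w = 1) {M : ℝ} (hM : 0 ≤ M)
    (hcv : ConvexOn ℝ (Ioi M) (fun x => Real.log (f x)))
    {x : ℝ} (hx : 0 < x) :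
    Real.log (f x) = Tfun q w k r s a b x := by
  have key : ∀ n : ℕ, ∀ y : ℝ, 0 < y → y ≤ ((n:ℝ) + 1) * w →
      Real.log (f y) = Tfun q w k r s a b y := by
    intro n
    induction n with
    | zero =>
        intro y hy hyw
        simp only [Nat.cast_zero, zero_add, one_mul] at hyw
        exact phi_eq_T_base hq0 hq1 hw ha hb hpos hfe hfw hM hcv hy hyw
    | succ m ih =>
        intro y hy hyw
        by_cases hc : y ≤ ((m:ℝ) + 1) * w
        · exact ih y hy hc
        · push_neg at hc
          have hyw' : 0 < y - w := by
            have : w ≤ ((m:ℝ) + 1) * w := by nlinarith [Nat.cast_nonneg (α := ℝ) m]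
            linarith
          have hle : y - w ≤ ((m:ℝ) + 1) * w := by
            push_cast at hyw
            nlinarith [hyw]
          have h1 := phi_rec hq0 hq1 ha hb hpos hfe hyw' hw
          rw [sub_add_cancel] at h1
          have h2 := Tfun_rec (k := k) hq0 hq1 hw ha hb hyw'
          rw [sub_add_cancel] at h2
          rw [h1, h2, ih (y - w) hyw' hle]
  obtain ⟨n, hn⟩ := exists_nat_gt (x / w)
  have : x ≤ ((n:ℝ) + 1) * w := by
    have : x / w < (n:ℝ) := hn
    rw [div_lt_iff₀ hw] at this
    nlinarith
  exact key n x hx this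

lemma master_convex (hq0 : 0 < q) (hq1 : q < 1) (hw : 0 < w)
    (ha : ∀ i, 0 ≤ a i) (hb : ∀ j, 0 ≤ b j)
    {f : ℝ → ℝ} (hpos : ∀ x > 0, 0 < f x)
    (hfe : ∀ x > 0, f (x + w) =
      ((∏ i, qBracket q (x + a i)) / ∏ j, qBracket q (x + b j)) ^ k * f x)
    (hfw : f w = 1) {M : ℝ} (hM : 0 ≤ M)
    (hcv : ConvexOn ℝ (Ioi M) (fun x => Real.log (f x))) :
    ∀ x > 0, f x = mainSol q w k r s a b x := by
  intro x hx
  have h1 := phi_eq_T_all hq0 hq1 hw ha hb hpos hfe hfw hM hcv hx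
  have h2 := log_mainSol (k := k) hq0 hq1 hw ha hb hx
  have h3 : Real.log (f x) = Real.log (mainSol q w k r s a b x) := by rw [h1, h2]
  have := congrArg Real.exp h3
  rwa [Real.exp_log (hpos x hx),
    Real.exp_log (mainSol_pos hq0 hq1 hw ha hb hx)] at this

end helpers


theorem stmt7 (q w k : ℝ) (hq0 : 0 < q) (hq1 : q < 1) (hw : 0 < w) (r s : ℕ)
    (a : Fin r → ℝ) (b : Fin s → ℝ) (ha : ∀ i, 0 ≤ a i) (hb : ∀ j, 0 ≤ b j)
    (f : ℝ → ℝ) (hpos : ∀ x > 0, 0 < f x)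
    (hfe : ∀ x > 0, f (x + w) =
      ((∏ i, qBracket q (x + a i)) / ∏ j, qBracket q (x + b j)) ^ k * f x)
    (hfw : f w = 1)
    (M : ℝ) (hM : 0 ≤ M)
    (hconv : ConvexOn ℝ (Ioi M) (fun x => Real.log (f x)) ∨
             ConcaveOn ℝ (Ioi M) (fun x => Real.log (f x))) :
    ∀ x > 0, f x = mainSol q w k r s a b x := by
  rcases hconv with hcv | hcc
  · exact master_convex hq0 hq1 hw ha hb hpos hfe hfw hM hcv
  · -- concave case: apply the convex case to `f⁻¹` with exponent `-k`
    set f' : ℝ → ℝ := fun y => (f y)⁻¹ with hf'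
    have hpos' : ∀ x > 0, 0 < f' x := fun x hx => by
      simp only [hf']; exact inv_pos.mpr (hpos x hx)
    have hfe' : ∀ x > 0, f' (x + w) =
        ((∏ i, qBracket q (x + a i)) / ∏ j, qBracket q (x + b j)) ^ (-k) * f' x := by
      intro x hx
      have hG : (0:ℝ) < (∏ i, qBracket q (x + a i)) / ∏ j, qBracket q (x + b j) := by
        rw [exp_gE hq0 hq1 ha hb hx]; exact Real.exp_pos _
      simp only [hf']
      rw [hfe x hx, Real.rpow_neg hG.le, mul_inv]
    have hfw' : f' w = 1 := by simp only [hf', hfw, inv_one]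
    have hcv' : ConvexOn ℝ (Ioi M) (fun x => Real.log (f' x)) := by
      have heq : (fun x => Real.log (f' x)) = fun x => -Real.log (f x) := by
        funext y; simp only [hf', Real.log_inv]
      rw [heq]
      exact hcc.neg
    have hres := master_convex hq0 hq1 hw ha hb hpos' hfe' hfw' hM hcv'
    intro x hx
    have h1 := hres x hx
    simp only [hf'] at h1
    rw [mainSol_neg_k hq0 hq1 hw ha hb hx] at h1
    rw [← inv_inv (f x), h1, inv_inv]
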